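/- arXiv:2605.03589 — 2 statements merged into one kernel-verified Lean document; each statement's English description precedes it below -/
import Mathlib

section
/- Let C \subseteq F_2^n be an orthogonal array of strength \tau and cardinality M, let y \in F_2^n, and let w_i(y) = |\{x \in C : d(x,y) = i\}|. Then for any real polynomial f of degree at most \tau with Krawtchouk expansion f(t) = f_0 + \sum_{j=1}^{\tau} f_j Q_j(t), one has \sum_{i=0}^n w_i(y) f(t_{n-i}) = f_0 M, where t_m = -1 + 2m/n. -/
noncomputable def rchoose (z : ℝ) (j : ℕ) : ℝ :=
  (∏ t ∈ Finset.range j, (z - t)) / (Nat.factorial j)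

/-- Binary Krawtchouk polynomial `K_i^{(n)}(z)`. -/
noncomputable def Kr (n i : ℕ) (z : ℝ) : ℝ :=
  ∑ j ∈ Finset.range (i + 1), (-1 : ℝ) ^ j * rchoose z j * rchoose ((n : ℝ) - z) (i - j)

/-- Normalized Krawtchouk polynomial `Q_i(t) = K_i^{(n)}(n(1-t)/2)/binom(n,i)`. -/
noncomputable def Qn (n i : ℕ) (t : ℝ) : ℝ :=
  Kr n i ((n : ℝ) * (1 - t) / 2) / (n.choose i : ℝ)

/-- The point `t_m = -1 + 2m/n`. -/
noncomputable def tpt (n m : ℕ) : ℝ := -1 + 2 * (m : ℝ) / (n : ℝ)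

/-- Integral of `f` with respect to the measure `μ_n = 2^{-n} ∑ binom(n,i) δ_{t_i}`. -/
noncomputable def muInt (n : ℕ) (f : ℝ → ℝ) : ℝ :=
  ((2 : ℝ) ^ n)⁻¹ * ∑ i ∈ Finset.range (n + 1), (n.choose i : ℝ) * f (tpt n i)
/-- `C` is a binary orthogonal array of length `n` and strength `τ`: every projection
onto `τ` coordinates takes each value equally often. -/
def IsOA (n τ : ℕ) (C : Finset (Fin n → ZMod 2)) : Prop :=
  ∀ S : Finset (Fin n), S.card = τ → ∀ v : Fin n → ZMod 2,
    (C.filter fun x => ∀ i ∈ S, x i = v i).card * 2 ^ τ = C.card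

/-- `⟨x,y⟩ = 1 - 2 d(x,y)/n`. -/
noncomputable def inn (n : ℕ) (x y : Fin n → ZMod 2) : ℝ :=
  1 - 2 * (hammingDist x y : ℝ) / (n : ℝ)

/-- Covering radius `ρ(C) = min_y max_{x ∈ C} ⟨x,y⟩`. -/
noncomputable def covRad (n : ℕ) (C : Finset (Fin n → ZMod 2)) (hC : C.Nonempty) : ℝ :=
  Finset.univ.inf' Finset.univ_nonempty (fun y => C.sup' hC fun x => inn n x y)

/-! ### Auxiliary lemmas -/

lemma prod_desc (m j : ℕ) : ∏ t ∈ Finset.range j, ((m : ℝ) - t) = (m.descFactorial j : ℝ) := by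
  induction j with
  | zero => simp
  | succ j ih =>
    rw [Finset.prod_range_succ, ih, Nat.descFactorial_succ]
    rcases le_or_gt j m with h | h
    · push_cast [h]; ring
    · rw [Nat.descFactorial_of_lt h]; simp

lemma rchoose_nat (m j : ℕ) : rchoose (m : ℝ) j = (m.choose j : ℝ) := by
  rw [rchoose, prod_desc, Nat.descFactorial_eq_factorial_mul_choose]
  push_cast
  rw [mul_comm, mul_div_assoc, div_self (by exact_mod_cast j.factorial_ne_zero), mul_one]

/-- The sign character on `ZMod 2`. -/
noncomputable def sgn (a : ZMod 2) : ℝ := if a = 0 then 1 else -1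

lemma zmodtwo_univ : (Finset.univ : Finset (ZMod 2)) = {0, 1} := by decide

lemma sgn_sum_zero (c : ZMod 2) : ∑ b : ZMod 2, sgn (b + c) = 0 := by
  rw [zmodtwo_univ]
  fin_cases c <;> simp [sgn, show (1 + 1 : ZMod 2) = 0 from rfl] <;> simp +decide

lemma card_count (n j t : ℕ) (ht : t ≤ j) (D : Finset (Fin n)) :
    ((Finset.powersetCard j (Finset.univ : Finset (Fin n))).filter
        fun S => (S ∩ D).card = t).card
      = D.card.choose t * (n - D.card).choose (j - t) := by
  classical
  have key : ((Finset.powersetCard j (Finset.univ : Finset (Fin n))).filter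
        fun S => (S ∩ D).card = t).card
      = ((Finset.powersetCard t D) ×ˢ (Finset.powersetCard (j - t) (Finset.univ \ D))).card := by
    apply Finset.card_bij' (fun S _ => (S ∩ D, S \ D)) (fun p _ => p.1 ∪ p.2)
    · intro S hS
      simp only [Finset.mem_filter, Finset.mem_powersetCard] at hS
      obtain ⟨⟨-, hcard⟩, hint⟩ := hS
      simp only [Finset.mem_product, Finset.mem_powersetCard]
      have h1 : (S ∩ D).card + (S \ D).card = S.card := Finset.card_inter_add_card_sdiff S D
      refine ⟨⟨Finset.inter_subset_right, hint⟩, ⟨?_, by omega⟩⟩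
      intro x hx
      simp only [Finset.mem_sdiff] at hx ⊢
      exact ⟨Finset.mem_univ x, hx.2⟩
    · intro p hp
      simp only [Finset.mem_product, Finset.mem_powersetCard] at hp
      obtain ⟨⟨hp1, hc1⟩, hp2, hc2⟩ := hp
      have hdisj : Disjoint p.1 p.2 := by
        refine Finset.disjoint_left.mpr fun a ha hb => ?_
        have := hp2 hb
        simp only [Finset.mem_sdiff] at this
        exact this.2 (hp1 ha)
      simp only [Finset.mem_filter, Finset.mem_powersetCard]
      have hcup : (p.1 ∪ p.2).card = j := by
        rw [Finset.card_union_of_disjoint hdisj]; omega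
      refine ⟨⟨Finset.subset_univ _, hcup⟩, ?_⟩
      have : (p.1 ∪ p.2) ∩ D = p.1 := by
        rw [Finset.union_inter_distrib_right, Finset.inter_eq_left.mpr hp1]
        have : p.2 ∩ D = ∅ := by
          refine Finset.eq_empty_of_forall_notMem fun a ha => ?_
          simp only [Finset.mem_inter] at ha
          have := hp2 ha.1
          simp only [Finset.mem_sdiff] at this
          exact this.2 ha.2
        rw [this, Finset.union_empty]
      rw [this, hc1]
    · intro S hS
      exact sup_inf_sdiff S D
    · intro p hp
      simp only [Finset.mem_product, Finset.mem_powersetCard] at hp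
      obtain ⟨⟨hp1, hc1⟩, hp2, hc2⟩ := hp
      have h2 : p.2 ∩ D = ∅ := by
        refine Finset.eq_empty_of_forall_notMem fun a ha => ?_
        simp only [Finset.mem_inter] at ha
        have := hp2 ha.1
        simp only [Finset.mem_sdiff] at this
        exact this.2 ha.2
      have e1 : (p.1 ∪ p.2) ∩ D = p.1 := by
        rw [Finset.union_inter_distrib_right, Finset.inter_eq_left.mpr hp1, h2,
          Finset.union_empty]
      have e2 : (p.1 ∪ p.2) \ D = p.2 := by
        rw [Finset.union_sdiff_distrib, Finset.sdiff_eq_empty_iff_subset.mpr hp1,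
          Finset.empty_union]
        apply Finset.sdiff_eq_self_iff_disjoint.mpr
        refine Finset.disjoint_left.mpr fun a ha hb => ?_
        have := hp2 ha
        simp only [Finset.mem_sdiff] at this
        exact this.2 hb
      exact Prod.ext e1 e2
  rw [key, Finset.card_product, Finset.card_powersetCard, Finset.card_powersetCard,
    Finset.card_sdiff_of_subset (Finset.subset_univ D), Finset.card_univ, Fintype.card_fin]

lemma Kr_char (n j : ℕ) (x y : Fin n → ZMod 2) :
    Kr n j ((hammingDist x y : ℕ) : ℝ)
      = ∑ S ∈ Finset.powersetCard j Finset.univ, ∏ i ∈ S, sgn (x i + y i) := by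
  classical
  set D : Finset (Fin n) := Finset.univ.filter fun i => x i ≠ y i with hD
  have hdD : hammingDist x y = D.card := rfl
  have hDn : D.card ≤ n := by
    simpa using (Finset.card_le_card (Finset.subset_univ D)).trans_eq (by simp)
  have hprod : ∀ S ∈ Finset.powersetCard j (Finset.univ : Finset (Fin n)),
      ∏ i ∈ S, sgn (x i + y i) = (-1 : ℝ) ^ (S ∩ D).card := by
    intro S _
    have h1 : ∀ i ∈ S, sgn (x i + y i) = if i ∈ D then (-1 : ℝ) else 1 := by
      intro i _
      by_cases h : x i = y i
      · have hx0 : x i + y i = 0 := by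
          rw [h, CharTwo.add_self_eq_zero]
        simp [sgn, hD, h, CharTwo.add_self_eq_zero]
      · have hx0 : x i + y i ≠ 0 := by
          intro hc
          apply h
          have : x i + y i = x i - y i := by ring_nf; exact (CharTwo.sub_eq_add (x i) (y i)).symm
          rw [this] at hc
          exact sub_eq_zero.mp hc
        simp only [sgn, hD, Finset.mem_filter, Finset.mem_univ, true_and, if_neg hx0,
          if_pos h]
    rw [Finset.prod_congr rfl h1, Finset.prod_ite, Finset.prod_const, Finset.prod_const,
      one_pow, mul_one, Finset.filter_mem_eq_inter]
  rw [Finset.sum_congr rfl hprod]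
  have hmap : ∀ S ∈ Finset.powersetCard j (Finset.univ : Finset (Fin n)),
      (S ∩ D).card ∈ Finset.range (j + 1) := by
    intro S hS
    rw [Finset.mem_range, Nat.lt_succ_iff]
    calc (S ∩ D).card ≤ S.card := Finset.card_le_card Finset.inter_subset_left
    _ = j := (Finset.mem_powersetCard.mp hS).2
  rw [← Finset.sum_fiberwise_of_maps_to hmap (fun S => (-1 : ℝ) ^ (S ∩ D).card), Kr]
  apply Finset.sum_congr rfl
  intro t ht
  rw [Finset.mem_range, Nat.lt_succ_iff] at ht
  rw [Finset.sum_congr rfl (fun S hS => by rw [(Finset.mem_filter.mp hS).2]),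
    Finset.sum_const, card_count n j t ht D, hdD, rchoose_nat,
    show ((n : ℝ) - (D.card : ℕ)) = ((n - D.card : ℕ) : ℝ) by push_cast [hDn]; ring,
    rchoose_nat]
  ring

lemma char_sum_zero (n τ : ℕ) (hτ : τ ≤ n) (C : Finset (Fin n → ZMod 2)) (hOA : IsOA n τ C)
    (y : Fin n → ZMod 2) (S : Finset (Fin n)) (hS : S.Nonempty) (hScard : S.card ≤ τ) :
    ∑ x ∈ C, ∏ i ∈ S, sgn (x i + y i) = 0 := by
  classical
  obtain ⟨T, hST, -, hTcard⟩ :=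
    Finset.exists_subsuperset_card_eq (Finset.subset_univ S) hScard
      (by simpa using hτ)
  set φ : (Fin n → ZMod 2) → (↥T → ZMod 2) := fun x i => x i.1 with hφ
  rw [← Finset.sum_fiberwise C φ (fun x => ∏ i ∈ S, sgn (x i + y i))]
  have hTS : T.filter (fun i => i ∈ S) = S := by
    ext i; simp only [Finset.mem_filter]
    exact ⟨fun h => h.2, fun h => ⟨hST h, h⟩⟩
  have hfiber : ∀ v : ↥T → ZMod 2, ∀ x ∈ C.filter fun z => φ z = v,
      ∏ i ∈ S, sgn (x i + y i)
        = ∏ i ∈ T.attach, (if (i : Fin n) ∈ S then sgn (v i + y i) else 1) := by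
    intro v x hx
    have hxv : ∀ i : ↥T, x i.1 = v i :=
      fun i => congrFun (Finset.mem_filter.mp hx).2 i
    have h1 : ∏ i ∈ T.attach, (if (i : Fin n) ∈ S then sgn (v i + y i) else 1)
        = ∏ i ∈ T.attach, (if (i : Fin n) ∈ S then sgn (x i + y i) else 1) :=
      Finset.prod_congr rfl fun i _ => by rw [← hxv i]
    rw [h1, Finset.prod_attach T (fun i => if i ∈ S then sgn (x i + y i) else 1),
      ← Finset.prod_filter, hTS]
  have hcard : ∀ v : ↥T → ZMod 2,
      ((C.filter fun z => φ z = v).card : ℝ) = (C.card : ℝ) / 2 ^ τ := by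
    intro v
    set v' : Fin n → ZMod 2 := fun i => if h : i ∈ T then v ⟨i, h⟩ else 0 with hv'
    have heq : (C.filter fun z => φ z = v) = C.filter fun z => ∀ i ∈ T, z i = v' i := by
      apply Finset.filter_congr
      intro z _
      constructor
      · intro h i hi
        rw [hv']; simp only [dif_pos hi]
        exact congrFun h ⟨i, hi⟩
      · intro h
        funext i
        have := h i.1 i.2
        rw [hv'] at this; simpa [dif_pos i.2] using this
    have := hOA T hTcard v'
    rw [heq]
    have h2 : (0 : ℝ) < 2 ^ τ := by positivity
    field_simp
    exact_mod_cast this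
  calc ∑ v : ↥T → ZMod 2, ∑ x ∈ C.filter fun z => φ z = v, ∏ i ∈ S, sgn (x i + y i)
      = ∑ v : ↥T → ZMod 2, ((C.card : ℝ) / 2 ^ τ) *
          ∏ i ∈ T.attach, (if (i : Fin n) ∈ S then sgn (v i + y i) else 1) := by
        apply Finset.sum_congr rfl
        intro v _
        rw [Finset.sum_congr rfl (hfiber v), Finset.sum_const, nsmul_eq_mul, hcard v]
    _ = ((C.card : ℝ) / 2 ^ τ) * ∑ v : ↥T → ZMod 2,
          ∏ i ∈ T.attach, (if (i : Fin n) ∈ S then sgn (v i + y i) else 1) := by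
        rw [Finset.mul_sum]
    _ = 0 := by
        rw [show (∑ v : ↥T → ZMod 2,
            ∏ i ∈ T.attach, (if (i : Fin n) ∈ S then sgn (v i + y i) else 1)) = 0 from ?_,
          mul_zero]
        have hps := Finset.prod_univ_sum (fun _ : ↥T => (Finset.univ : Finset (ZMod 2)))
          (fun i b => if (i : Fin n) ∈ S then sgn (b + y i) else 1)
        rw [Fintype.piFinset_univ, Finset.univ_eq_attach] at hps
        rw [← hps]
        obtain ⟨i0, hi0⟩ := hS
        apply Finset.prod_eq_zero (Finset.mem_attach T ⟨i0, hST hi0⟩)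
        simp only [if_pos hi0]
        exact sgn_sum_zero (y i0)

/-- Delsarte's identity: for an orthogonal array of strength `τ`, the distance
distribution with respect to any point `y` satisfies
`∑ w_i(y) f(t_{n-i}) = f_0 |C|` for polynomials of degree at most `τ` given ∈ the
Krawtchouk basis. -/
theorem oa_distance_distribution_identity (n τ : ℕ) (hn : 1 ≤ n) (hτ : τ ≤ n)
    (C : Finset (Fin n → ZMod 2)) (hOA : IsOA n τ C) (y : Fin n → ZMod 2)
    (f : ℕ → ℝ) :
    ∑ i ∈ Finset.range (n + 1),
        ((C.filter fun x => hammingDist x y = i).card : ℝ) *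
          (∑ j ∈ Finset.range (τ + 1), f j * Qn n j (tpt n (n - i)))
      = f 0 * (C.card : ℝ) := by
  classical
  have hn0 : (n : ℝ) ≠ 0 := Nat.cast_ne_zero.mpr (by omega)
  have hQ : ∀ i ∈ Finset.range (n + 1), ∀ j : ℕ,
      Qn n j (tpt n (n - i)) = Kr n j ((i : ℕ) : ℝ) / (n.choose j : ℝ) := by
    intro i hi j
    rw [Finset.mem_range, Nat.lt_succ_iff] at hi
    rw [Qn, tpt]
    congr 2
    have hni : ((n - i : ℕ) : ℝ) = (n : ℝ) - i := by push_cast [hi]; ring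
    rw [hni]
    field_simp
    ring
  set w : ℕ → ℝ := fun i => ((C.filter fun x => hammingDist x y = i).card : ℝ) with hw
  have key : ∀ j : ℕ, ∑ i ∈ Finset.range (n + 1), w i * Kr n j ((i : ℕ) : ℝ)
      = ∑ x ∈ C, Kr n j ((hammingDist x y : ℕ) : ℝ) := by
    intro j
    rw [← Finset.sum_fiberwise_of_maps_to (g := fun x => hammingDist x y)
      (fun x _ => Finset.mem_range.mpr (Nat.lt_succ_of_le
        (by simpa using (hammingDist_le_card_fintype (x := x) (y := y)))))
      (fun x => Kr n j ((hammingDist x y : ℕ) : ℝ))]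
    apply Finset.sum_congr rfl
    intro i _
    rw [Finset.sum_congr rfl (fun x hx => by rw [(Finset.mem_filter.mp hx).2]),
      Finset.sum_const, nsmul_eq_mul]
  have hKr0 : ∀ z : ℝ, Kr n 0 z = 1 := by
    intro z; simp [Kr, rchoose]
  have hzero : ∀ j, 1 ≤ j → j ≤ τ →
      ∑ x ∈ C, Kr n j ((hammingDist x y : ℕ) : ℝ) = 0 := by
    intro j hj1 hjτ
    rw [Finset.sum_congr rfl (fun x _ => Kr_char n j x y), Finset.sum_comm]
    apply Finset.sum_eq_zero
    intro S hS
    have hcardS := (Finset.mem_powersetCard.mp hS).2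
    exact char_sum_zero n τ hτ C hOA y S (Finset.card_pos.mp (by omega)) (by omega)
  calc ∑ i ∈ Finset.range (n + 1), w i *
          (∑ j ∈ Finset.range (τ + 1), f j * Qn n j (tpt n (n - i)))
      = ∑ i ∈ Finset.range (n + 1), ∑ j ∈ Finset.range (τ + 1),
          (f j / (n.choose j : ℝ)) * (w i * Kr n j ((i : ℕ) : ℝ)) := by
        apply Finset.sum_congr rfl
        intro i hi
        rw [Finset.mul_sum]
        apply Finset.sum_congr rfl
        intro j _
        rw [hQ i hi j]; ring
    _ = ∑ j ∈ Finset.range (τ + 1), (f j / (n.choose j : ℝ)) *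
          ∑ i ∈ Finset.range (n + 1), w i * Kr n j ((i : ℕ) : ℝ) := by
        rw [Finset.sum_comm]
        exact Finset.sum_congr rfl fun j _ => (Finset.mul_sum _ _ _).symm
    _ = f 0 * (C.card : ℝ) := by
        rw [Finset.sum_range_succ']
        have hz : ∀ j ∈ Finset.range τ, (f (j + 1) / (n.choose (j + 1) : ℝ)) *
            ∑ i ∈ Finset.range (n + 1), w i * Kr n (j + 1) ((i : ℕ) : ℝ) = 0 := by
          intro j hj
          rw [Finset.mem_range] at hj
          rw [key, hzero (j + 1) (by omega) (by omega), mul_zero]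
        rw [Finset.sum_congr rfl hz, Finset.sum_const, smul_zero, zero_add, key 0,
          Finset.sum_congr rfl (fun x _ => hKr0 _), Finset.sum_const, nsmul_eq_mul, mul_one]
        simp
end

section
/- Let n \ge 4 and let C \subseteq F_2^n be an orthogonal array of strength 4 such that every point y attaining the covering radius has its antipode in C. Then for every real a for which the denominator is positive, \rho(C) \ge (|C|(n^2 a^2 - 2n(n-2)a + 3n - 2) - 2n^2(1+a)^2) / (n|C|(n(n-2)a^2 - 2na + n - 2) + 2n^2(1+a)^2). -/
section AuxOA
open Finset

def eps (n : ℕ) (y x : Fin n → ZMod 2) (i : Fin n) : ℝ := if x i = y i then 1 else -1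

lemma zmod2_eq_or (c d : ZMod 2) : c = d ∨ c = d + 1 := by revert c d; decide

lemma zmod2_not_both (c d : ZMod 2) : c = d → c ≠ d + 1 := by revert c d; decide

lemma oa_count (n : ℕ) (hn : 4 ≤ n) (C : Finset (Fin n → ZMod 2)) (hOA : IsOA n 4 C) :
    ∀ (k : ℕ) (S : Finset (Fin n)) (v : Fin n → ZMod 2), S.card + k = 4 →
      (C.filter fun x => ∀ i ∈ S, x i = v i).card * 2 ^ S.card = C.card := by
  intro k
  induction k with
  | zero =>
    intro S v h
    have h4 : S.card = 4 := by omega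
    rw [h4]
    exact hOA S h4 v
  | succ k ih =>
    intro S v h
    obtain ⟨j, hj⟩ : ∃ j, j ∉ S := by
      by_contra hcon
      push_neg at hcon
      have hu : S = Finset.univ := Finset.eq_univ_iff_forall.2 hcon
      have : S.card = n := by rw [hu]; simp
      omega
    have hci : (insert j S).card = S.card + 1 := Finset.card_insert_of_notMem hj
    have hck : (insert j S).card + k = 4 := by omega
    have h0 := ih (insert j S) (Function.update v j 0) hck
    have h1 := ih (insert j S) (Function.update v j 1) hck
    rw [hci] at h0 h1
    have hsplit : (C.filter fun x => ∀ i ∈ S, x i = v i)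
        = (C.filter fun x => ∀ i ∈ insert j S, x i = Function.update v j 0 i)
          ∪ (C.filter fun x => ∀ i ∈ insert j S, x i = Function.update v j 1 i) := by
      ext x
      simp only [Finset.mem_filter, Finset.mem_union, Finset.mem_insert]
      constructor
      · rintro ⟨hxC, hx⟩
        have hx' : ∀ i, i = j ∨ i ∈ S → i ∈ S → x i = v i := fun i _ => hx i
        rcases zmod2_eq_or (x j) 0 with hj0 | hj1
        · left
          refine ⟨hxC, fun i hi => ?_⟩
          rcases hi with rfl | hi
          · rw [Function.update_self]; exact hj0
          · rw [Function.update_of_ne (by rintro rfl; exact hj hi)]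
            exact hx i hi
        · right
          refine ⟨hxC, fun i hi => ?_⟩
          rcases hi with rfl | hi
          · rw [Function.update_self]; simpa using hj1
          · rw [Function.update_of_ne (by rintro rfl; exact hj hi)]
            exact hx i hi
      · rintro (⟨hxC, hx⟩ | ⟨hxC, hx⟩) <;>
          refine ⟨hxC, fun i hi => ?_⟩ <;>
          · have := hx i (Or.inr hi)
            rwa [Function.update_of_ne (by rintro rfl; exact hj hi)] at this
    have hdisj : Disjoint
        (C.filter fun x => ∀ i ∈ insert j S, x i = Function.update v j 0 i)
        (C.filter fun x => ∀ i ∈ insert j S, x i = Function.update v j 1 i) := by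
      rw [Finset.disjoint_left]
      intro x hx0 hx1
      simp only [Finset.mem_filter] at hx0 hx1
      have e0 := hx0.2 j (Finset.mem_insert_self j S)
      have e1 := hx1.2 j (Finset.mem_insert_self j S)
      rw [Function.update_self] at e0 e1
      rw [e0] at e1
      exact absurd e1 (by decide)
    rw [hsplit, Finset.card_union_of_disjoint hdisj]
    have hc0 := Nat.eq_of_mul_eq_mul_right (Nat.pos_of_ne_zero (by positivity))
      (h0.trans h1.symm)
    rw [pow_succ] at h0
    calc ((C.filter fun x => ∀ i ∈ insert j S, x i = Function.update v j 0 i).card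
          + (C.filter fun x => ∀ i ∈ insert j S, x i = Function.update v j 1 i).card) * 2 ^ S.card
        = (C.filter fun x => ∀ i ∈ insert j S, x i = Function.update v j 0 i).card
            * 2 ^ S.card * 2 := by rw [← hc0]; ring
      _ = C.card := by rw [← h0]; ring

lemma key_sum (n : ℕ) (hn : 4 ≤ n) (C : Finset (Fin n → ZMod 2)) (hOA : IsOA n 4 C)
    (y : Fin n → ZMod 2) (S : Finset (Fin n)) (hne : S.Nonempty) (hc : S.card ≤ 4) :
    ∑ x ∈ C, ∏ i ∈ S, eps n y x i = 0 := by
  simp only [eps]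
  have hprod : ∀ x : Fin n → ZMod 2,
      (∏ i ∈ S, (if x i = y i then (1:ℝ) else -1))
        = ∑ T ∈ S.powerset, (-2:ℝ)^T.card * (if ∀ i ∈ T, x i = y i + 1 then 1 else 0) := by
    intro x
    have hpt : ∀ i ∈ S, (if x i = y i then (1:ℝ) else -1)
        = (-2) * (if x i = y i + 1 then (1:ℝ) else 0) + 1 := by
      intro i _
      rcases zmod2_eq_or (x i) (y i) with h | h
      · rw [if_pos h, if_neg (zmod2_not_both _ _ h)]; ring
      · rw [if_pos h, if_neg]
        · ring
        · intro he; exact zmod2_not_both _ _ he h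
    rw [Finset.prod_congr rfl hpt, Finset.prod_add]
    refine Finset.sum_congr rfl fun T hT => ?_
    rw [Finset.prod_const_one, mul_one, Finset.prod_mul_distrib, Finset.prod_const]
    congr 1
    by_cases hall : ∀ i ∈ T, x i = y i + 1
    · rw [if_pos hall]
      exact Finset.prod_eq_one fun i hi => by rw [if_pos (hall i hi)]
    · rw [if_neg hall]
      push_neg at hall
      obtain ⟨i, hi, hnei⟩ := hall
      exact Finset.prod_eq_zero hi (by rw [if_neg hnei])
  rw [Finset.sum_congr rfl fun x _ => hprod x, Finset.sum_comm]
  have hterm : ∀ T ∈ S.powerset,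
      ∑ x ∈ C, (-2:ℝ)^T.card * (if ∀ i ∈ T, x i = y i + 1 then 1 else 0)
        = (-1:ℝ)^T.card * (C.card : ℝ) := by
    intro T hT
    have hTc : T.card ≤ 4 := le_trans (Finset.card_le_card (Finset.mem_powerset.1 hT)) hc
    have hcount := oa_count n hn C hOA (4 - T.card) T (fun i => y i + 1) (by omega)
    have hcountR : ((C.filter fun x => ∀ i ∈ T, x i = y i + 1).card : ℝ) * 2 ^ T.card
        = (C.card : ℝ) := by exact_mod_cast congrArg (Nat.cast : ℕ → ℝ) hcount
    rw [← Finset.mul_sum, Finset.sum_boole]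
    have : (-2:ℝ)^T.card = (-1:ℝ)^T.card * 2^T.card := by
      rw [← neg_one_mul, mul_pow]
    rw [this]
    calc (-1:ℝ)^T.card * 2^T.card * ((C.filter fun x => ∀ i ∈ T, x i = y i + 1).card : ℝ)
        = (-1:ℝ)^T.card * (((C.filter fun x => ∀ i ∈ T, x i = y i + 1).card : ℝ) * 2^T.card) := by
          ring
      _ = (-1:ℝ)^T.card * (C.card : ℝ) := by rw [hcountR]
  rw [Finset.sum_congr rfl hterm, ← Finset.sum_mul]
  have : ∑ T ∈ S.powerset, (-1:ℝ)^T.card = 0 := by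
    have := Finset.sum_powerset_neg_one_pow_card_of_nonempty (x := S) hne
    exact_mod_cast congrArg (Int.cast : ℤ → ℝ) this
  rw [this, zero_mul]


variable {n : ℕ} {C : Finset (Fin n → ZMod 2)} {y : Fin n → ZMod 2}

lemma eps_sq (n : ℕ) (y x : Fin n → ZMod 2) (i : Fin n) : eps n y x i * eps n y x i = 1 := by
  unfold eps; split_ifs <;> norm_num

variable {n : ℕ} {C : Finset (Fin n → ZMod 2)} {y : Fin n → ZMod 2}

lemma single_sum (hn : 4 ≤ n) (hOA : IsOA n 4 C) (i : Fin n) :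
    ∑ x ∈ C, eps n y x i = 0 := by
  have := key_sum n hn C hOA y {i} (Finset.singleton_nonempty i) (by simp)
  simpa using this

lemma pair_sum (hn : 4 ≤ n) (hOA : IsOA n 4 C) {i j : Fin n} (h : i ≠ j) :
    ∑ x ∈ C, eps n y x i * eps n y x j = 0 := by
  have := key_sum n hn C hOA y {i, j} (Finset.insert_nonempty _ _)
    (le_trans (Finset.card_insert_le _ _) (by simp))
  simpa [Finset.prod_pair h] using this

lemma mom1 (hn : 4 ≤ n) (hOA : IsOA n 4 C) :
    ∑ x ∈ C, (∑ i, eps n y x i) = 0 := by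
  rw [Finset.sum_comm]
  exact Finset.sum_eq_zero fun i _ => single_sum hn hOA i

lemma mom2 (hn : 4 ≤ n) (hOA : IsOA n 4 C) :
    ∑ x ∈ C, (∑ i, eps n y x i)^2 = (C.card : ℝ) * n := by
  have h1 : ∀ x, (∑ i, eps n y x i)^2 = ∑ i, ∑ j, eps n y x i * eps n y x j := by
    intro x; rw [sq, Finset.sum_mul_sum]
  rw [Finset.sum_congr rfl fun x _ => h1 x, Finset.sum_comm]
  have h2 : ∀ i : Fin n, ∑ x ∈ C, ∑ j, eps n y x i * eps n y x j = (C.card : ℝ) := by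
    intro i
    rw [Finset.sum_comm]
    have h3 : ∀ j : Fin n, ∑ x ∈ C, eps n y x i * eps n y x j
        = if i = j then (C.card : ℝ) else 0 := by
      intro j
      by_cases h : i = j
      · subst h
        rw [if_pos rfl]
        rw [Finset.sum_congr rfl fun x _ => eps_sq n y x i, Finset.sum_const, nsmul_eq_mul,
          mul_one]
      · rw [if_neg h]
        exact pair_sum hn hOA h
    rw [Finset.sum_congr rfl fun j _ => h3 j, Finset.sum_ite_eq]
    simp
  rw [Finset.sum_congr rfl fun i _ => h2 i, Finset.sum_const, nsmul_eq_mul]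
  simp [mul_comm]

lemma triple_sum (hn : 4 ≤ n) (hOA : IsOA n 4 C) (i j k : Fin n) :
    ∑ x ∈ C, eps n y x i * eps n y x j * eps n y x k = 0 := by
  by_cases hij : i = j
  · subst hij
    have : ∀ x : Fin n → ZMod 2, eps n y x i * eps n y x i * eps n y x k = eps n y x k := by
      intro x; rw [eps_sq, one_mul]
    rw [Finset.sum_congr rfl fun x _ => this x]
    exact single_sum hn hOA k
  · by_cases hik : i = k
    · subst hik
      have : ∀ x : Fin n → ZMod 2, eps n y x i * eps n y x j * eps n y x i = eps n y x j := by
        intro x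
        rw [show eps n y x i * eps n y x j * eps n y x i
          = eps n y x i * eps n y x i * eps n y x j by ring, eps_sq, one_mul]
      rw [Finset.sum_congr rfl fun x _ => this x]
      exact single_sum hn hOA j
    · by_cases hjk : j = k
      · subst hjk
        have : ∀ x : Fin n → ZMod 2, eps n y x i * eps n y x j * eps n y x j = eps n y x i := by
          intro x
          rw [mul_assoc, eps_sq, mul_one]
        rw [Finset.sum_congr rfl fun x _ => this x]
        exact single_sum hn hOA i
      · have hS : ({i, j, k} : Finset (Fin n)).card ≤ 4 := by
          apply le_trans (Finset.card_insert_le _ _)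
          have h2 : ({j, k} : Finset (Fin n)).card ≤ 2 :=
            le_trans (Finset.card_insert_le _ _) (by simp)
          omega
        have hkey := key_sum n hn C hOA y {i, j, k} (Finset.insert_nonempty _ _) hS
        have hpr : ∀ x : Fin n → ZMod 2, ∏ l ∈ ({i, j, k} : Finset (Fin n)), eps n y x l
            = eps n y x i * eps n y x j * eps n y x k := by
          intro x
          rw [Finset.prod_insert (by simp [hij, hik]), Finset.prod_pair hjk, mul_assoc]
        rwa [Finset.sum_congr rfl fun x _ => hpr x] at hkey

lemma mom3 (hn : 4 ≤ n) (hOA : IsOA n 4 C) :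
    ∑ x ∈ C, (∑ i, eps n y x i)^3 = 0 := by
  have h1 : ∀ x : Fin n → ZMod 2, (∑ i, eps n y x i)^3
      = ∑ i, ∑ j, ∑ k, eps n y x i * eps n y x j * eps n y x k := by
    intro x
    rw [show ((∑ i, eps n y x i))^3 = ((∑ i, eps n y x i) * (∑ j, eps n y x j))
      * (∑ k, eps n y x k) by ring, Finset.sum_mul_sum, Finset.sum_mul]
    refine Finset.sum_congr rfl fun i _ => ?_
    rw [Finset.sum_mul]
    refine Finset.sum_congr rfl fun j _ => ?_
    rw [Finset.mul_sum]
  rw [Finset.sum_congr rfl fun x _ => h1 x, Finset.sum_comm]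
  refine Finset.sum_eq_zero fun i _ => ?_
  rw [Finset.sum_comm]
  refine Finset.sum_eq_zero fun j _ => ?_
  rw [Finset.sum_comm]
  exact Finset.sum_eq_zero fun k _ => triple_sum hn hOA i j k

lemma quad_sum (hn : 4 ≤ n) (hOA : IsOA n 4 C) (i j k l : Fin n) :
    ∑ x ∈ C, eps n y x i * eps n y x j * eps n y x k * eps n y x l
      = if (i = j ∧ k = l) ∨ (i = k ∧ j = l) ∨ (i = l ∧ j = k)
        then (C.card : ℝ) else 0 := by
  by_cases hij : i = j
  · subst hij
    by_cases hkl : k = l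
    · subst hkl
      rw [if_pos (Or.inl ⟨rfl, rfl⟩)]
      have hp : ∀ x : Fin n → ZMod 2,
          eps n y x i * eps n y x i * eps n y x k * eps n y x k = 1 := by
        intro x; rw [eps_sq, one_mul, eps_sq]
      rw [Finset.sum_congr rfl fun x _ => hp x, Finset.sum_const, nsmul_eq_mul, mul_one]
    · rw [if_neg (by
        rintro (⟨-, h⟩ | ⟨h1, h2⟩ | ⟨h1, h2⟩)
        · exact hkl h
        · exact hkl (h1.symm.trans h2)
        · exact hkl (h2.symm.trans h1))]
      have hp : ∀ x : Fin n → ZMod 2,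
          eps n y x i * eps n y x i * eps n y x k * eps n y x l
            = eps n y x k * eps n y x l := by
        intro x; rw [eps_sq, one_mul]
      rw [Finset.sum_congr rfl fun x _ => hp x]
      exact pair_sum hn hOA hkl
  · by_cases hik : i = k
    · subst hik
      by_cases hjl : j = l
      · subst hjl
        rw [if_pos (Or.inr (Or.inl ⟨rfl, rfl⟩))]
        have hp : ∀ x : Fin n → ZMod 2,
            eps n y x i * eps n y x j * eps n y x i * eps n y x j = 1 := by
          intro x
          rw [show eps n y x i * eps n y x j * eps n y x i * eps n y x j
            = (eps n y x i * eps n y x i) * (eps n y x j * eps n y x j) by ring,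
            eps_sq, eps_sq, one_mul]
        rw [Finset.sum_congr rfl fun x _ => hp x, Finset.sum_const, nsmul_eq_mul, mul_one]
      · rw [if_neg (by
          rintro (⟨h, -⟩ | ⟨-, h⟩ | ⟨-, h⟩)
          · exact hij h
          · exact hjl h
          · exact hij h.symm)]
        have hp : ∀ x : Fin n → ZMod 2,
            eps n y x i * eps n y x j * eps n y x i * eps n y x l
              = eps n y x j * eps n y x l := by
          intro x
          rw [show eps n y x i * eps n y x j * eps n y x i * eps n y x l
            = (eps n y x i * eps n y x i) * (eps n y x j * eps n y x l) by ring,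
            eps_sq, one_mul]
        rw [Finset.sum_congr rfl fun x _ => hp x]
        exact pair_sum hn hOA hjl
    · by_cases hil : i = l
      · subst hil
        by_cases hjk : j = k
        · subst hjk
          rw [if_pos (Or.inr (Or.inr ⟨rfl, rfl⟩))]
          have hp : ∀ x : Fin n → ZMod 2,
              eps n y x i * eps n y x j * eps n y x j * eps n y x i = 1 := by
            intro x
            rw [show eps n y x i * eps n y x j * eps n y x j * eps n y x i
              = (eps n y x i * eps n y x i) * (eps n y x j * eps n y x j) by ring,
              eps_sq, eps_sq, one_mul]
          rw [Finset.sum_congr rfl fun x _ => hp x, Finset.sum_const, nsmul_eq_mul, mul_one]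
        · rw [if_neg (by
            rintro (⟨h, -⟩ | ⟨h, -⟩ | ⟨-, h⟩)
            · exact hij h
            · exact hik h
            · exact hjk h)]
          have hp : ∀ x : Fin n → ZMod 2,
              eps n y x i * eps n y x j * eps n y x k * eps n y x i
                = eps n y x j * eps n y x k := by
            intro x
            rw [show eps n y x i * eps n y x j * eps n y x k * eps n y x i
              = (eps n y x i * eps n y x i) * (eps n y x j * eps n y x k) by ring,
              eps_sq, one_mul]
          rw [Finset.sum_congr rfl fun x _ => hp x]
          exact pair_sum hn hOA hjk
      · rw [if_neg (by
          rintro (⟨h, -⟩ | ⟨h, -⟩ | ⟨h, -⟩)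
          · exact hij h
          · exact hik h
          · exact hil h)]
        by_cases hjk : j = k
        · subst hjk
          have hp : ∀ x : Fin n → ZMod 2,
              eps n y x i * eps n y x j * eps n y x j * eps n y x l
                = eps n y x i * eps n y x l := by
            intro x
            rw [show eps n y x i * eps n y x j * eps n y x j * eps n y x l
              = (eps n y x j * eps n y x j) * (eps n y x i * eps n y x l) by ring,
              eps_sq, one_mul]
          rw [Finset.sum_congr rfl fun x _ => hp x]
          exact pair_sum hn hOA hil
        · by_cases hjl : j = l
          · subst hjl
            have hp : ∀ x : Fin n → ZMod 2,
                eps n y x i * eps n y x j * eps n y x k * eps n y x j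
                  = eps n y x i * eps n y x k := by
              intro x
              rw [show eps n y x i * eps n y x j * eps n y x k * eps n y x j
                = (eps n y x j * eps n y x j) * (eps n y x i * eps n y x k) by ring,
                eps_sq, one_mul]
            rw [Finset.sum_congr rfl fun x _ => hp x]
            exact pair_sum hn hOA hik
          · by_cases hkl : k = l
            · subst hkl
              have hp : ∀ x : Fin n → ZMod 2,
                  eps n y x i * eps n y x j * eps n y x k * eps n y x k
                    = eps n y x i * eps n y x j := by
                intro x; rw [mul_assoc, eps_sq, mul_one]
              rw [Finset.sum_congr rfl fun x _ => hp x]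
              exact pair_sum hn hOA hij
            · have hiS : i ∉ ({j, k, l} : Finset (Fin n)) := by simp [hij, hik, hil]
              have hjS : j ∉ ({k, l} : Finset (Fin n)) := by simp [hjk, hjl]
              have hcard : ({i, j, k, l} : Finset (Fin n)).card = 4 := by
                rw [show ({i, j, k, l} : Finset (Fin n)) = insert i (insert j {k, l}) from rfl,
                  Finset.card_insert_of_notMem hiS, Finset.card_insert_of_notMem hjS,
                  Finset.card_pair hkl]
              have hkey := key_sum n hn C hOA y {i, j, k, l}
                (Finset.insert_nonempty _ _) (le_of_eq hcard)
              have hpr : ∀ x : Fin n → ZMod 2,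
                  ∏ m ∈ ({i, j, k, l} : Finset (Fin n)), eps n y x m
                    = eps n y x i * eps n y x j * eps n y x k * eps n y x l := by
                intro x
                rw [show ({i, j, k, l} : Finset (Fin n)) = insert i (insert j {k, l}) from rfl,
                  Finset.prod_insert hiS, Finset.prod_insert hjS, Finset.prod_pair hkl]
                ring
              rwa [Finset.sum_congr rfl fun x _ => hpr x] at hkey

lemma ite_pairing {α : Type*} [DecidableEq α] (M : ℝ) (i j k l : α) :
    (if (i = j ∧ k = l) ∨ (i = k ∧ j = l) ∨ (i = l ∧ j = k) then M else 0)
      = (if i = j then (1:ℝ) else 0) * (if k = l then M else 0)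
        + (if i = k then (1:ℝ) else 0) * (if j = l then M else 0)
        + (if i = l then (1:ℝ) else 0) * (if j = k then M else 0)
        - 2 * ((if i = j then (1:ℝ) else 0) * ((if i = k then (1:ℝ) else 0)
            * (if i = l then M else 0))) := by
  by_cases h1 : i = j <;> by_cases h2 : k = l <;> by_cases h3 : i = k <;>
    by_cases h4 : j = l <;> by_cases h5 : i = l <;> by_cases h6 : j = k <;>
    simp_all <;> ring

lemma hsum_ite (b : Fin n) (c : ℝ) : ∑ m : Fin n, (if b = m then c else 0) = c := by
  rw [Finset.sum_ite_eq]; simp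

lemma hsum_ite' (b : Fin n) (c : ℝ) :
    ∑ m : Fin n, (if b = m then (1:ℝ) else 0) * c = c := by
  rw [Finset.sum_congr rfl fun m _ => show (if b = m then (1:ℝ) else 0) * c
    = if b = m then c else 0 by split_ifs <;> ring]
  exact hsum_ite b c

lemma hsum_const (c : ℝ) : ∑ _m : Fin n, c = (n:ℝ) * c := by
  rw [Finset.sum_const, Finset.card_univ, Fintype.card_fin, nsmul_eq_mul]

lemma mom4 (hn : 4 ≤ n) (hOA : IsOA n 4 C) :
    ∑ x ∈ C, (∑ i, eps n y x i)^4
      = (C.card : ℝ) * (3 * (n:ℝ)^2 - 2 * n) := by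
  set M : ℝ := (C.card : ℝ) with hM
  have h1 : ∀ x : Fin n → ZMod 2, (∑ i, eps n y x i)^4
      = ∑ i, ∑ j, ∑ k, ∑ l, eps n y x i * eps n y x j * eps n y x k * eps n y x l := by
    intro x
    have h2sq : (∑ i, eps n y x i)^2 = ∑ i, ∑ j, eps n y x i * eps n y x j := by
      rw [sq, Finset.sum_mul_sum]
    rw [show ((∑ i, eps n y x i))^4 = (∑ i, eps n y x i)^2 * (∑ i, eps n y x i)^2 by ring,
      h2sq, Finset.sum_mul]
    refine Finset.sum_congr rfl fun i _ => ?_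
    rw [Finset.sum_mul]
    refine Finset.sum_congr rfl fun j _ => ?_
    rw [Finset.mul_sum]
    refine Finset.sum_congr rfl fun k _ => ?_
    rw [Finset.mul_sum]
    exact Finset.sum_congr rfl fun l _ => by ring
  rw [Finset.sum_congr rfl fun x _ => h1 x, Finset.sum_comm]
  have h2 : ∀ i : Fin n, ∑ x ∈ C, ∑ j, ∑ k, ∑ l,
      eps n y x i * eps n y x j * eps n y x k * eps n y x l
      = ∑ j, ∑ k, ∑ l, ∑ x ∈ C,
      eps n y x i * eps n y x j * eps n y x k * eps n y x l := by
    intro i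
    rw [Finset.sum_comm]
    refine Finset.sum_congr rfl fun j _ => ?_
    rw [Finset.sum_comm]
    refine Finset.sum_congr rfl fun k _ => ?_
    rw [Finset.sum_comm]
  rw [Finset.sum_congr rfl fun i _ => h2 i]
  have h3 : ∀ i j k l : Fin n, ∑ x ∈ C,
      eps n y x i * eps n y x j * eps n y x k * eps n y x l
      = (if i = j then (1:ℝ) else 0) * (if k = l then M else 0)
        + (if i = k then (1:ℝ) else 0) * (if j = l then M else 0)
        + (if i = l then (1:ℝ) else 0) * (if j = k then M else 0)
        - 2 * ((if i = j then (1:ℝ) else 0) * ((if i = k then (1:ℝ) else 0)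
            * (if i = l then M else 0))) := by
    intro i j k l
    rw [quad_sum hn hOA i j k l]
    exact ite_pairing M i j k l
  rw [Finset.sum_congr rfl fun i _ => Finset.sum_congr rfl fun j _ =>
    Finset.sum_congr rfl fun k _ => Finset.sum_congr rfl fun l _ => h3 i j k l]
  have SA : ∑ i : Fin n, ∑ j : Fin n, ∑ k : Fin n, ∑ l : Fin n,
      (if i = j then (1:ℝ) else 0) * (if k = l then M else 0) = (n:ℝ) * ((n:ℝ) * M) := by
    have inner : ∀ i j : Fin n, ∑ k : Fin n, ∑ l : Fin n,
        (if i = j then (1:ℝ) else 0) * (if k = l then M else 0)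
          = (if i = j then (1:ℝ) else 0) * ((n:ℝ) * M) := by
      intro i j
      simp only [← Finset.mul_sum]
      rw [Finset.sum_congr rfl fun k _ => hsum_ite k M, hsum_const M]
    rw [Finset.sum_congr rfl fun i _ => Finset.sum_congr rfl fun j _ => inner i j,
      Finset.sum_congr rfl fun i _ => hsum_ite' i ((n:ℝ) * M), hsum_const ((n:ℝ) * M)]
  have SB : ∑ i : Fin n, ∑ j : Fin n, ∑ k : Fin n, ∑ l : Fin n,
      (if i = k then (1:ℝ) else 0) * (if j = l then M else 0) = (n:ℝ) * ((n:ℝ) * M) := by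
    have inner : ∀ i j : Fin n, ∑ k : Fin n, ∑ l : Fin n,
        (if i = k then (1:ℝ) else 0) * (if j = l then M else 0) = M := by
      intro i j
      rw [Finset.sum_congr rfl fun k _ => by rw [← Finset.mul_sum, hsum_ite j M],
        hsum_ite' i M]
    rw [Finset.sum_congr rfl fun i _ => Finset.sum_congr rfl fun j _ => inner i j,
      Finset.sum_congr rfl fun i _ => hsum_const M, hsum_const ((n:ℝ) * M)]
  have SC : ∑ i : Fin n, ∑ j : Fin n, ∑ k : Fin n, ∑ l : Fin n,
      (if i = l then (1:ℝ) else 0) * (if j = k then M else 0) = (n:ℝ) * ((n:ℝ) * M) := by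
    have inner : ∀ i j : Fin n, ∑ k : Fin n, ∑ l : Fin n,
        (if i = l then (1:ℝ) else 0) * (if j = k then M else 0) = M := by
      intro i j
      have inner2 : ∀ k : Fin n, ∑ l : Fin n,
          (if i = l then (1:ℝ) else 0) * (if j = k then M else 0)
            = (if j = k then M else 0) := by
        intro k
        rw [hsum_ite' i ((if j = k then M else 0))]
      rw [Finset.sum_congr rfl fun k _ => inner2 k, hsum_ite j M]
    rw [Finset.sum_congr rfl fun i _ => Finset.sum_congr rfl fun j _ => inner i j,
      Finset.sum_congr rfl fun i _ => hsum_const M, hsum_const ((n:ℝ) * M)]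
  have SD : ∑ i : Fin n, ∑ j : Fin n, ∑ k : Fin n, ∑ l : Fin n,
      2 * ((if i = j then (1:ℝ) else 0) * ((if i = k then (1:ℝ) else 0)
        * (if i = l then M else 0))) = 2 * ((n:ℝ) * M) := by
    have inner3 : ∀ i j k : Fin n, ∑ l : Fin n,
        2 * ((if i = j then (1:ℝ) else 0) * ((if i = k then (1:ℝ) else 0)
          * (if i = l then M else 0)))
        = if i = k then (if i = j then 2 * M else 0) else 0 := by
      intro i j k
      rw [Finset.sum_congr rfl fun l _ => show
        2 * ((if i = j then (1:ℝ) else 0) * ((if i = k then (1:ℝ) else 0)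
          * (if i = l then M else 0)))
        = if i = l then (if i = k then (if i = j then 2 * M else 0) else 0) else 0 by
          split_ifs <;> ring]
      exact hsum_ite i _
    have inner2 : ∀ i j : Fin n, ∑ k : Fin n,
        (if i = k then (if i = j then 2 * M else 0) else 0)
          = if i = j then 2 * M else 0 := fun i j => hsum_ite i _
    rw [Finset.sum_congr rfl fun i _ => Finset.sum_congr rfl fun j _ =>
        (Finset.sum_congr rfl fun k _ => inner3 i j k).trans (inner2 i j),
      Finset.sum_congr rfl fun i _ => hsum_ite i (2 * M), hsum_const (2 * M)]
    ring
  have hsplit : ∑ i : Fin n, ∑ j : Fin n, ∑ k : Fin n, ∑ l : Fin n,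
      ((if i = j then (1:ℝ) else 0) * (if k = l then M else 0)
        + (if i = k then (1:ℝ) else 0) * (if j = l then M else 0)
        + (if i = l then (1:ℝ) else 0) * (if j = k then M else 0)
        - 2 * ((if i = j then (1:ℝ) else 0) * ((if i = k then (1:ℝ) else 0)
            * (if i = l then M else 0))))
      = (∑ i : Fin n, ∑ j : Fin n, ∑ k : Fin n, ∑ l : Fin n,
          (if i = j then (1:ℝ) else 0) * (if k = l then M else 0))
        + (∑ i : Fin n, ∑ j : Fin n, ∑ k : Fin n, ∑ l : Fin n,
          (if i = k then (1:ℝ) else 0) * (if j = l then M else 0))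
        + (∑ i : Fin n, ∑ j : Fin n, ∑ k : Fin n, ∑ l : Fin n,
          (if i = l then (1:ℝ) else 0) * (if j = k then M else 0))
        - (∑ i : Fin n, ∑ j : Fin n, ∑ k : Fin n, ∑ l : Fin n,
          2 * ((if i = j then (1:ℝ) else 0) * ((if i = k then (1:ℝ) else 0)
            * (if i = l then M else 0)))) := by
    simp only [Finset.sum_add_distrib, Finset.sum_sub_distrib]
  rw [hsplit, SA, SB, SC, SD]
  ring

end AuxOA

/-- Case `t_1(y) = -1`: parametric LP bound for the covering radius of
strength-4 orthogonal arrays. -/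
theorem covering_radius_strength4_antipodal_bound (n : ℕ) (hn : 4 ≤ n)
    (C : Finset (Fin n → ZMod 2)) (hC : C.Nonempty) (hOA : IsOA n 4 C)
    (hant : ∀ y : Fin n → ZMod 2,
      (C.sup' hC fun x => inn n x y) = covRad n C hC → (fun i => y i + 1) ∈ C)
    (a : ℝ)
    (hden : 0 < (n : ℝ) * (C.card : ℝ) * ((n : ℝ) * ((n : ℝ) - 2) * a ^ 2
        - 2 * (n : ℝ) * a + (n : ℝ) - 2) + 2 * (n : ℝ) ^ 2 * (1 + a) ^ 2) :
    ((C.card : ℝ) * ((n : ℝ) ^ 2 * a ^ 2 - 2 * (n : ℝ) * ((n : ℝ) - 2) * a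
          + 3 * (n : ℝ) - 2) - 2 * (n : ℝ) ^ 2 * (1 + a) ^ 2)
        / ((n : ℝ) * (C.card : ℝ) * ((n : ℝ) * ((n : ℝ) - 2) * a ^ 2
          - 2 * (n : ℝ) * a + (n : ℝ) - 2) + 2 * (n : ℝ) ^ 2 * (1 + a) ^ 2)
      ≤ covRad n C hC := by
  classical
  have hn0 : (0:ℝ) < (n:ℝ) := by positivity
  obtain ⟨y₀, -, hy₀⟩ := Finset.exists_mem_eq_inf'
    (Finset.univ_nonempty (α := Fin n → ZMod 2)) (fun y => C.sup' hC fun x => inn n x y)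
  have hrho : covRad n C hC = C.sup' hC fun x => inn n x y₀ := hy₀
  set ρ : ℝ := covRad n C hC with hρdef
  have hbar : (fun i => y₀ i + 1) ∈ C := hant y₀ hrho.symm
  set M : ℝ := (C.card : ℝ) with hM
  -- basic facts about e x := ∑ i, eps n y₀ x i
  have Fe : ∀ x : Fin n → ZMod 2,
      (∑ i, eps n y₀ x i) = (n:ℝ) - 2 * (hammingDist x y₀ : ℝ) := by
    intro x
    have hd : hammingDist x y₀ = (Finset.univ.filter (fun i => ¬ x i = y₀ i)).card := rfl
    have hsplit : (Finset.univ.filter (fun i : Fin n => x i = y₀ i)).card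
        + (Finset.univ.filter (fun i : Fin n => ¬ x i = y₀ i)).card = n := by
      rw [Finset.card_filter_add_card_filter_not]; simp
    unfold eps
    rw [Finset.sum_ite, Finset.sum_const, Finset.sum_const, nsmul_eq_mul, nsmul_eq_mul,
      hd]
    have : (((Finset.univ.filter (fun i : Fin n => x i = y₀ i)).card) : ℝ)
        = (n:ℝ) - ((Finset.univ.filter (fun i : Fin n => ¬ x i = y₀ i)).card : ℝ) := by
      have := congrArg (Nat.cast : ℕ → ℝ) hsplit
      push_cast at this ⊢
      linarith
    rw [this]
    ring
  have F2 : ∀ x : Fin n → ZMod 2, (n:ℝ) * inn n x y₀ = (∑ i, eps n y₀ x i) := by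
    intro x
    rw [Fe x]
    unfold inn
    field_simp
  have F3 : ∀ x ∈ C, (∑ i, eps n y₀ x i) ≤ (n:ℝ) * ρ := by
    intro x hx
    rw [← F2 x]
    have : inn n x y₀ ≤ ρ := by
      rw [hrho]
      exact Finset.le_sup' (fun x => inn n x y₀) hx
    nlinarith
  have F4 : (∑ i, eps n y₀ (fun i => y₀ i + 1) i) = -(n:ℝ) := by
    have hne : ∀ c : ZMod 2, ¬ (c + 1 = c) := by decide
    have : ∀ i : Fin n, eps n y₀ (fun i => y₀ i + 1) i = -1 := by
      intro i; unfold eps; rw [if_neg (hne (y₀ i))]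
    rw [Finset.sum_congr rfl fun i _ => this i, Finset.sum_const, Finset.card_univ,
      Fintype.card_fin, nsmul_eq_mul]
    ring
  have F5 : ∀ x ∈ C, x ≠ (fun i => y₀ i + 1) → -(n:ℝ) + 2 ≤ (∑ i, eps n y₀ x i) := by
    intro x _ hxne
    obtain ⟨i, hi⟩ := Function.ne_iff.mp hxne
    have hieq : x i = y₀ i := by
      have h2 : ∀ c d : ZMod 2, ¬ c = d + 1 → c = d := by decide
      exact h2 _ _ hi
    have hsum := Finset.add_sum_erase Finset.univ (eps n y₀ x) (Finset.mem_univ i)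
    have hepsi : eps n y₀ x i = 1 := by unfold eps; rw [if_pos hieq]
    have hbound : ((Finset.univ.erase i).card) • (-1:ℝ) ≤ ∑ j ∈ Finset.univ.erase i, eps n y₀ x j := by
      apply Finset.card_nsmul_le_sum
      intro j _
      unfold eps; split_ifs <;> norm_num
    have hcard : (Finset.univ.erase i).card = n - 1 := by
      rw [Finset.card_erase_of_mem (Finset.mem_univ i), Finset.card_univ, Fintype.card_fin]
    rw [hcard, nsmul_eq_mul] at hbound
    have hcast : ((n - 1 : ℕ) : ℝ) = (n:ℝ) - 1 := by
      have : (1:ℕ) ≤ n := by omega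
      push_cast [this]
      ring
    rw [hcast] at hbound
    have : (∑ i, eps n y₀ x i) = eps n y₀ x i + ∑ j ∈ Finset.univ.erase i, eps n y₀ x j :=
      hsum.symm
    rw [this, hepsi]
    linarith
  -- the key inequality
  have KEY : ∑ x ∈ C, ((∑ i, eps n y₀ x i) + ((n:ℝ) - 2)) * ((∑ i, eps n y₀ x i) - n * ρ)
      * ((∑ i, eps n y₀ x i) - n * a)^2 ≤ 2 * (n:ℝ)^3 * (1 + ρ) * (1 + a)^2 := by
    have hsplit := Finset.add_sum_erase C
      (fun x => ((∑ i, eps n y₀ x i) + ((n:ℝ) - 2)) * ((∑ i, eps n y₀ x i) - n * ρ)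
        * ((∑ i, eps n y₀ x i) - n * a)^2) hbar
    rw [← hsplit]
    beta_reduce
    have hterm : ((∑ i, eps n y₀ (fun i => y₀ i + 1) i) + ((n:ℝ) - 2))
        * ((∑ i, eps n y₀ (fun i => y₀ i + 1) i) - n * ρ)
        * ((∑ i, eps n y₀ (fun i => y₀ i + 1) i) - n * a)^2
        = 2 * (n:ℝ)^3 * (1 + ρ) * (1 + a)^2 := by
      rw [F4]; ring
    rw [hterm]
    have hrest : ∑ x ∈ C.erase (fun i => y₀ i + 1),
        ((∑ i, eps n y₀ x i) + ((n:ℝ) - 2)) * ((∑ i, eps n y₀ x i) - n * ρ)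
        * ((∑ i, eps n y₀ x i) - n * a)^2 ≤ 0 := by
      apply Finset.sum_nonpos
      intro x hx
      have hxC := Finset.mem_of_mem_erase hx
      have hxne := Finset.ne_of_mem_erase hx
      have hA : 0 ≤ (∑ i, eps n y₀ x i) + ((n:ℝ) - 2) := by
        have := F5 x hxC hxne; linarith
      have hB : (∑ i, eps n y₀ x i) - (n:ℝ) * ρ ≤ 0 := by
        have := F3 x hxC; linarith
      have hAB : ((∑ i, eps n y₀ x i) + ((n:ℝ) - 2)) * ((∑ i, eps n y₀ x i) - n * ρ) ≤ 0 :=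
        mul_nonpos_of_nonneg_of_nonpos hA hB
      have := mul_nonneg (neg_nonneg.mpr hAB) (sq_nonneg ((∑ i, eps n y₀ x i) - n * a))
      nlinarith [this]
    linarith
  -- expansion via moments
  set c3 : ℝ := ((n:ℝ) - 2) - n * ρ - 2 * (n * a) with hc3
  set c2 : ℝ := (n * a)^2 - 2 * (n * a) * (((n:ℝ) - 2) - n * ρ) - ((n:ℝ) - 2) * (n * ρ)
    with hc2
  set c1 : ℝ := (n * a)^2 * (((n:ℝ) - 2) - n * ρ) + 2 * (n * a) * ((n:ℝ) - 2) * (n * ρ)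
    with hc1
  set c0 : ℝ := -((n:ℝ) - 2) * (n * ρ) * (n * a)^2 with hc0
  have hexp : ∀ t : ℝ, (t + ((n:ℝ) - 2)) * (t - n * ρ) * (t - n * a)^2
      = t^4 + c3 * t^3 + c2 * t^2 + c1 * t + c0 := by
    intro t; rw [hc3, hc2, hc1, hc0]; ring
  have EXPAND : ∑ x ∈ C, ((∑ i, eps n y₀ x i) + ((n:ℝ) - 2)) * ((∑ i, eps n y₀ x i) - n * ρ)
      * ((∑ i, eps n y₀ x i) - n * a)^2
      = M * (3 * (n:ℝ)^2 - 2 * n) + c2 * (M * n) + M * c0 := by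
    rw [Finset.sum_congr rfl fun x _ => hexp (∑ i, eps n y₀ x i)]
    rw [Finset.sum_add_distrib, Finset.sum_add_distrib, Finset.sum_add_distrib,
      Finset.sum_add_distrib, ← Finset.mul_sum, ← Finset.mul_sum, ← Finset.mul_sum,
      Finset.sum_const, nsmul_eq_mul]
    rw [mom1 hn hOA, mom2 hn hOA, mom3 hn hOA, mom4 hn hOA]
    rw [← hM]
    ring
  rw [EXPAND] at KEY
  -- final algebra
  set NUM : ℝ := M * ((n : ℝ) ^ 2 * a ^ 2 - 2 * (n : ℝ) * ((n : ℝ) - 2) * a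
      + 3 * (n : ℝ) - 2) - 2 * (n : ℝ) ^ 2 * (1 + a) ^ 2 with hNUM
  set DEN : ℝ := (n : ℝ) * M * ((n : ℝ) * ((n : ℝ) - 2) * a ^ 2
      - 2 * (n : ℝ) * a + (n : ℝ) - 2) + 2 * (n : ℝ) ^ 2 * (1 + a) ^ 2 with hDEN
  rw [div_le_iff₀ hden]
  have hring : M * (3 * (n:ℝ)^2 - 2 * n) + c2 * (M * n) + M * c0
      - 2 * (n:ℝ)^3 * (1 + ρ) * (1 + a)^2
      = (n:ℝ) * (NUM - ρ * DEN) := by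
    rw [hNUM, hDEN, hc2, hc0]; ring
  have h6 : (n:ℝ) * (NUM - ρ * DEN) ≤ (n:ℝ) * 0 := by
    rw [mul_zero, ← hring]; linarith
  have h7 : NUM - ρ * DEN ≤ 0 := le_of_mul_le_mul_left h6 hn0
  linarith
end
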